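/- The average of the squared leave-one-out predictions converges: I₃ⁿ := (1/n)∑_{j=1}^n φ(μ̂^{(−j)})² = (1/n)∑_{j=1}^n exp( (2/(n−1))∑_{k≤n, k≠j} Y_k + 1 ) → e^{2μ+1} in probability as n → ∞. -/

import Mathlib

open MeasureTheory ProbabilityTheory Filter
open Real Topology

lemma gauss01_integrable : Integrable (fun x : ℝ => x) (gaussianReal 0 1) := by
  rw [gaussianReal_of_var_ne_zero _ one_ne_zero]
  rw [gaussianPDF_def,
    integrable_withDensity_iff (measurable_gaussianPDFReal 0 1).ennreal_ofReal
      (Filter.Eventually.of_forall fun x => ENNReal.ofReal_lt_top)]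
  have : ∀ x : ℝ, x * (ENNReal.ofReal (gaussianPDFReal 0 1 x)).toReal
      = ((Real.sqrt (2 * π))⁻¹) • (x * Real.exp (-(1/2) * x ^ 2)) := by
    intro x
    rw [ENNReal.toReal_ofReal (gaussianPDFReal_nonneg _ _ _), gaussianPDFReal]
    push_cast
    simp only [smul_eq_mul]
    ring_nf
  simp only [this]
  exact Integrable.smul ((Real.sqrt (2 * π))⁻¹)
    (integrable_mul_exp_neg_mul_sq (by norm_num : (0:ℝ) < 1/2))

lemma gauss01_mean : ∫ x : ℝ, x ∂(gaussianReal 0 1) = 0 := by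
  have h : (gaussianReal 0 1).map (fun x => (-1 : ℝ) * x) = gaussianReal 0 1 := by
    have := gaussianReal_map_const_mul (μ := 0) (v := 1) (-1)
    simpa using this
  have h2 := integral_map (μ := gaussianReal 0 1) (φ := fun x : ℝ => (-1) * x)
    (f := fun x : ℝ => x) (by fun_prop) measurable_id.aestronglyMeasurable
  rw [h] at h2
  have h3 : ∫ x : ℝ, (-1 : ℝ) * x ∂(gaussianReal 0 1)
      = - ∫ x : ℝ, x ∂(gaussianReal 0 1) := by
    rw [← integral_neg]
    congr 1
    funext x
    ring
  rw [h3] at h2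
  linarith

lemma gauss_map (μ0 : ℝ) : (gaussianReal 0 1).map (fun x => x + μ0) = gaussianReal μ0 1 := by
  have := gaussianReal_map_add_const (μ := 0) (v := 1) μ0
  simpa using this

lemma gauss_integrable (μ0 : ℝ) : Integrable (fun x : ℝ => x) (gaussianReal μ0 1) := by
  rw [← gauss_map μ0, integrable_map_measure measurable_id'.aestronglyMeasurable (by fun_prop)]
  have : ((fun x : ℝ => x) ∘ fun x : ℝ => x + μ0) = fun x : ℝ => x + μ0 := rfl
  rw [this]
  exact gauss01_integrable.add (integrable_const μ0)

lemma gauss_mean (μ0 : ℝ) : ∫ x : ℝ, x ∂(gaussianReal μ0 1) = μ0 := by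
  rw [← gauss_map μ0, integral_map (by fun_prop) measurable_id'.aestronglyMeasurable]
  have : ∫ x : ℝ, x + μ0 ∂(gaussianReal 0 1) = (∫ x : ℝ, x ∂(gaussianReal 0 1)) + μ0 := by
    rw [integral_add gauss01_integrable (integrable_const μ0)]
    simp
  rw [this, gauss01_mean, zero_add]

lemma abs_exp_sub_one_le (a : ℝ) : |Real.exp a - 1| ≤ |a| * Real.exp |a| := by
  rcases le_or_gt 0 a with h | h
  · rw [abs_of_nonneg h, abs_of_nonneg (by simpa using Real.one_le_exp h)]
    -- exp a - 1 ≤ a * exp a, from 1 - a ≤ exp (-a), multiplied by exp a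
    have h1 : 1 - a ≤ Real.exp (-a) := by
      have := Real.add_one_le_exp (-a); linarith
    have h2 : Real.exp (-a) * Real.exp a = 1 := by
      rw [← Real.exp_add]; simp
    nlinarith [Real.exp_pos a]
  · rw [abs_of_neg h, abs_of_nonpos (by simpa using Real.exp_le_one_iff.mpr h.le)]
    have h1 : a + 1 ≤ Real.exp a := Real.add_one_le_exp a
    nlinarith [Real.exp_pos (-a), Real.exp_pos a, Real.one_le_exp (neg_nonneg.mpr h.le)]

lemma aux_inv_tendsto : Tendsto (fun n : ℕ => (((n:ℝ) - 1))⁻¹) atTop (𝓝 0) := by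
  have h1 : Tendsto (fun n : ℕ => ((n:ℝ) - 1)) atTop atTop := by
    have := tendsto_atTop_add_const_right atTop (-1 : ℝ) tendsto_natCast_atTop_atTop
    simpa [sub_eq_add_neg] using this
  exact h1.inv_tendsto_atTop

lemma aux_q_tendsto : Tendsto (fun n : ℕ => (n:ℝ)/((n:ℝ) - 1)) atTop (𝓝 1) := by
  have h : Tendsto (fun n : ℕ => 1 + ((n:ℝ) - 1)⁻¹) atTop (𝓝 (1 + 0)) :=
    tendsto_const_nhds.add aux_inv_tendsto
  refine Tendsto.congr' ?_ (by simpa using h)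
  filter_upwards [eventually_ge_atTop 2] with n hn
  have hn2 : (2:ℝ) ≤ (n:ℝ) := by exact_mod_cast hn
  have h1 : (n:ℝ) - 1 ≠ 0 := by linarith
  field_simp
  ring

lemma det_aux (μ0 m : ℝ) (y : ℕ → ℝ)
    (hA : Tendsto (fun n : ℕ => (∑ j ∈ Finset.range n, y j) / n) atTop (𝓝 μ0))
    (hB : Tendsto (fun n : ℕ => (∑ j ∈ Finset.range n, |y j|) / n) atTop (𝓝 m)) :
    Tendsto (fun n : ℕ => (1 / (n:ℝ)) * ∑ j ∈ Finset.range n,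
        Real.exp ((2 / ((n:ℝ) - 1)) * ∑ k ∈ (Finset.range n).erase j, y k + 1))
      atTop (𝓝 (Real.exp (2 * μ0 + 1))) := by
  set f : ℕ → ℝ := fun n => (1 / (n:ℝ)) * ∑ j ∈ Finset.range n,
        Real.exp ((2 / ((n:ℝ) - 1)) * ∑ k ∈ (Finset.range n).erase j, y k + 1) with hf_def
  set c : ℕ → ℝ := fun n => 2 * ((n:ℝ)/((n:ℝ)-1)) * ((∑ j ∈ Finset.range n, y j) / n) + 1
    with hc_def
  set b : ℕ → ℝ := fun n => Real.exp (c n) *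
      Real.exp (2 * ((n:ℝ)/((n:ℝ)-1)) * ((∑ j ∈ Finset.range n, |y j|) / n)) *
      ((2 / ((n:ℝ)-1)) * ((∑ j ∈ Finset.range n, |y j|) / n)) with hb_def
  have hc : Tendsto c atTop (𝓝 (2 * μ0 + 1)) := by
    have : Tendsto c atTop (𝓝 (2 * 1 * μ0 + 1)) :=
      (((tendsto_const_nhds (x := (2:ℝ))).mul aux_q_tendsto).mul hA).add tendsto_const_nhds
    simpa using this
  have hb : Tendsto b atTop (𝓝 0) := by
    have : Tendsto b atTop (𝓝 (Real.exp (2 * μ0 + 1) * Real.exp (2 * 1 * m) * (0 * m))) := by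
      refine Tendsto.mul (Tendsto.mul ?_ ?_) (Tendsto.mul ?_ hB)
      · exact (Real.continuous_exp.tendsto _).comp hc
      · exact (Real.continuous_exp.tendsto _).comp
          (((tendsto_const_nhds (x := (2:ℝ))).mul aux_q_tendsto).mul hB)
      · have := (tendsto_const_nhds (x := (2:ℝ))).mul aux_inv_tendsto
        simpa [div_eq_mul_inv] using this
    simpa using this
  have key : ∀ᶠ n in atTop, ‖f n - Real.exp (c n)‖ ≤ b n := by
    filter_upwards [eventually_ge_atTop 2] with n hn
    have hn2 : (2:ℝ) ≤ (n:ℝ) := by exact_mod_cast hn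
    have hN0 : (0:ℝ) < (n:ℝ) := by linarith
    have hN1 : (0:ℝ) < (n:ℝ) - 1 := by linarith
    have hN0' : ((n:ℝ)) ≠ 0 := hN0.ne'
    have hN1' : ((n:ℝ) - 1) ≠ 0 := hN1.ne'
    obtain ⟨S, hS⟩ : ∃ S, (∑ j ∈ Finset.range n, y j) = S := ⟨_, rfl⟩
    obtain ⟨T, hT⟩ : ∃ T, (∑ j ∈ Finset.range n, |y j|) = T := ⟨_, rfl⟩
    obtain ⟨r, hr⟩ : ∃ r, 2 / ((n:ℝ) - 1) = r := ⟨_, rfl⟩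
    have hr0 : 0 ≤ r := by rw [← hr]; positivity
    have hT0 : 0 ≤ T := by rw [← hT]; exact Finset.sum_nonneg fun j _ => abs_nonneg _
    have hcn : c n = r * S + 1 := by
      simp only [hc_def]
      rw [hS, ← hr]
      field_simp
    have hf : f n = Real.exp (c n) * ((1/(n:ℝ)) * ∑ j ∈ Finset.range n,
        Real.exp (-(r * y j))) := by
      simp only [hf_def, hcn, Finset.mul_sum]
      refine Finset.sum_congr rfl fun j hj => ?_
      rw [Finset.sum_erase_eq_sub hj, ← Finset.mul_sum, hS, hr,
        show r * S - r * y j + 1 = (r * S + 1) + -(r * y j) by ring, Real.exp_add]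
      ring
    have hsum : f n - Real.exp (c n) = Real.exp (c n) *
        ((1/(n:ℝ)) * ∑ j ∈ Finset.range n, (Real.exp (-(r * y j)) - 1)) := by
      rw [hf]
      have h1 : ∑ j ∈ Finset.range n, (Real.exp (-(r * y j)) - 1)
          = (∑ j ∈ Finset.range n, Real.exp (-(r * y j))) - (n:ℝ) := by
        rw [Finset.sum_sub_distrib, Finset.sum_const, Finset.card_range]
        simp
      rw [h1, mul_sub, mul_sub, one_div_mul_cancel hN0', mul_one]
    rw [hsum, Real.norm_eq_abs, abs_mul, abs_of_pos (Real.exp_pos _), abs_mul,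
      abs_of_pos (by positivity : (0:ℝ) < 1/(n:ℝ))]
    have hterm : ∀ j ∈ Finset.range n, |Real.exp (-(r * y j)) - 1|
        ≤ r * |y j| * Real.exp (r * T) := by
      intro j hj
      have h1 : |(-(r * y j))| = r * |y j| := by
        rw [abs_neg, abs_mul, abs_of_nonneg hr0]
      have h2 : r * |y j| ≤ r * T := by
        apply mul_le_mul_of_nonneg_left _ hr0
        rw [← hT]
        exact Finset.single_le_sum (fun i _ => abs_nonneg (y i)) hj
      calc |Real.exp (-(r * y j)) - 1| ≤ |(-(r * y j))| * Real.exp |(-(r * y j))| :=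
            abs_exp_sub_one_le _
        _ = r * |y j| * Real.exp (r * |y j|) := by rw [h1]
        _ ≤ r * |y j| * Real.exp (r * T) := by
            apply mul_le_mul_of_nonneg_left (Real.exp_le_exp.mpr h2) (by positivity)
    calc Real.exp (c n) * ((1/(n:ℝ)) * |∑ j ∈ Finset.range n, (Real.exp (-(r * y j)) - 1)|)
        ≤ Real.exp (c n) * ((1/(n:ℝ)) * ∑ j ∈ Finset.range n, |Real.exp (-(r * y j)) - 1|) := by
          apply mul_le_mul_of_nonneg_left _ (Real.exp_pos _).le
          apply mul_le_mul_of_nonneg_left (Finset.abs_sum_le_sum_abs _ _) (by positivity)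
      _ ≤ Real.exp (c n) * ((1/(n:ℝ)) *
            ∑ j ∈ Finset.range n, (r * |y j| * Real.exp (r * T))) := by
          apply mul_le_mul_of_nonneg_left _ (Real.exp_pos _).le
          apply mul_le_mul_of_nonneg_left (Finset.sum_le_sum hterm) (by positivity)
      _ = Real.exp (c n) * Real.exp (r * T) * (r * (T / (n:ℝ))) := by
          have h3 : ∑ j ∈ Finset.range n, (r * |y j| * Real.exp (r * T))
              = T * (r * Real.exp (r * T)) := by
            calc ∑ j ∈ Finset.range n, (r * |y j| * Real.exp (r * T))
                = ∑ j ∈ Finset.range n, (|y j| * (r * Real.exp (r * T))) :=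
                  Finset.sum_congr rfl fun j _ => by ring
              _ = (∑ j ∈ Finset.range n, |y j|) * (r * Real.exp (r * T)) :=
                  (Finset.sum_mul _ _ _).symm
              _ = T * (r * Real.exp (r * T)) := by rw [hT]
          rw [h3]; ring
      _ = b n := by
          simp only [hb_def]
          rw [hT, hr]
          have h4 : 2 * ((n:ℝ)/((n:ℝ)-1)) * (T/(n:ℝ)) = r * T := by
            rw [← hr]; field_simp
          rw [h4]
  have h1 : Tendsto (fun n => f n - Real.exp (c n)) atTop (𝓝 0) :=
    squeeze_zero_norm' key hb
  have h2 := h1.add ((Real.continuous_exp.tendsto _).comp hc)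
  simpa using h2

/-- For i.i.d. `N(μ,1)` data, the average of the squared leave-one-out predictions
`I₃ⁿ = (1/n)∑ⱼ exp((2/(n−1))∑_{k≠j} Yₖ + 1)` converges to `e^{2μ+1}` in probability. -/
theorem stmt_19 {Ω : Type*} [MeasurableSpace Ω] (μ : Measure Ω) [IsProbabilityMeasure μ]
    (μ0 : ℝ) (Y : ℕ → Ω → ℝ) (hmeas : ∀ k, Measurable (Y k))
    (hindep : iIndepFun Y μ)
    (hdist : ∀ k, Measure.map (Y k) μ = gaussianReal μ0 1) :
    ∀ ε : ℝ, 0 < ε →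
      Tendsto (fun n : ℕ => μ {ω |
          ε ≤ |(1 / (n : ℝ)) * (∑ j ∈ Finset.range n,
                  Real.exp ((2 / ((n : ℝ) - 1)) * ∑ k ∈ (Finset.range n).erase j, Y k ω + 1))
              - Real.exp (2 * μ0 + 1)|})
        atTop (nhds 0) := by
  intro ε hε
  have hY0 : Integrable (Y 0) μ := by
    have h1 : Integrable (fun x : ℝ => x) (Measure.map (Y 0) μ) := by
      rw [hdist 0]; exact gauss_integrable μ0
    exact (integrable_map_measure measurable_id'.aestronglyMeasurable
      (hmeas 0).aemeasurable).mp h1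
  have hmean : μ[Y 0] = μ0 := by
    have h1 : ∫ ω, Y 0 ω ∂μ = ∫ x : ℝ, x ∂(Measure.map (Y 0) μ) :=
      (integral_map (hmeas 0).aemeasurable measurable_id'.aestronglyMeasurable).symm
    rw [show μ[Y 0] = ∫ ω, Y 0 ω ∂μ from rfl, h1, hdist 0, gauss_mean]
  have hident : ∀ i, IdentDistrib (Y i) (Y 0) μ μ := fun i =>
    ⟨(hmeas i).aemeasurable, (hmeas 0).aemeasurable, by rw [hdist, hdist]⟩
  have hpair : Pairwise (Function.onFun (IndepFun · · μ) Y) := fun i j hij => hindep.indepFun hij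
  have hA := strong_law_ae_real Y hY0 hpair hident
  rw [hmean] at hA
  have hZ0 : Integrable (fun ω => |Y 0 ω|) μ := hY0.abs
  have hZident : ∀ i, IdentDistrib (fun ω => |Y i ω|) (fun ω => |Y 0 ω|) μ μ := fun i =>
    (hident i).comp measurable_abs
  have hZpair : Pairwise (Function.onFun (IndepFun · · μ) fun k ω => |Y k ω|) := fun i j hij =>
    (hindep.indepFun hij).comp measurable_abs measurable_abs
  have hB := strong_law_ae_real (fun k ω => |Y k ω|) hZ0 hZpair hZident
  set F : ℕ → Ω → ℝ := fun n ω => (1 / (n : ℝ)) * (∑ j ∈ Finset.range n,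
      Real.exp ((2 / ((n : ℝ) - 1)) * ∑ k ∈ (Finset.range n).erase j, Y k ω + 1)) with hF_def
  have hae : ∀ᵐ ω ∂μ, Tendsto (fun n : ℕ => F n ω) atTop (𝓝 (Real.exp (2 * μ0 + 1))) := by
    filter_upwards [hA, hB] with ω h1 h2
    exact det_aux μ0 (μ[fun ω => |Y 0 ω|]) (fun k => Y k ω) h1 h2
  have hFmeas : ∀ n : ℕ, AEStronglyMeasurable (F n) μ := by
    intro n
    apply Measurable.aestronglyMeasurable
    apply Measurable.const_mul
    apply Finset.measurable_sum
    intro j _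
    exact Real.measurable_exp.comp
      (((Finset.measurable_sum _ fun k _ => hmeas k).const_mul _).add_const 1)
  have hTIM : TendstoInMeasure μ F atTop (fun _ => Real.exp (2 * μ0 + 1)) :=
    tendstoInMeasure_of_tendsto_ae hFmeas hae
  have h := tendstoInMeasure_iff_dist.mp hTIM ε hε
  simpa [Real.dist_eq, hF_def] using h
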